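/- Let m > n, fix t ∈ ℕ, and let X ∈ [-1/2,1/2]^{mn} be a matrix at distance at least 2^{-t} from the boundary of the cube, such that every nonzero q ∈ ℤᵐ with |qX|_∞ < m(2ᵗ)^{-m/n+1} satisfies |q|_∞ ≥ 2ᵗ/ω(t). Then there exists a nonzero q ∈ ℤᵐ with 2ᵗ/ω(t) ≤ |q|_∞ ≤ 2ᵗ and a matrix U with qU = 0 such that |X − U|_∞ ≤ m (2ᵗ)^{-m/n} ω(t). -/

import Mathlib

open MeasureTheory Filter

noncomputable def qnorm {m : ℕ} (q : Fin m → ℤ) : ℝ := ‖(fun i => (q i : ℝ) : Fin m → ℝ)‖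

def cube (m n : ℕ) : Set (Fin m → Fin n → ℝ) :=
  {X | ∀ i j, X i j ∈ Set.Icc (-(1/2) : ℝ) (1/2)}

def W0 (m n : ℕ) (ψ : ℝ → ℝ) : Set (Fin m → Fin n → ℝ) :=
  {X | X ∈ cube m n ∧
    {q : Fin m → ℤ | q ≠ 0 ∧
      ‖(fun j => ∑ i, (q i : ℝ) * X i j : Fin n → ℝ)‖ < ψ (qnorm q)}.Infinite}

noncomputable def Hf {α : Type*} [EMetricSpace α] [MeasurableSpace α] [BorelSpace α]
    (f : ℝ → ℝ) : Measure α :=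
  Measure.mkMetric (fun d => ENNReal.ofReal (f d.toReal))

/-- Strict inequality `x^a + 1 < (x+1)^a` for `x ≥ 1`, `a > 1`. -/
lemma rpow_add_one_lt {x a : ℝ} (hx : 1 ≤ x) (ha : 1 < a) :
    x ^ a + 1 < (x + 1) ^ a := by
  have hx0 : 0 < x := lt_of_lt_of_le one_pos hx
  have h1 : (x + 1) ^ a = (x + 1) * (x + 1) ^ (a - 1) := by
    rw [← Real.rpow_one_add' (by positivity) (by intro h; linarith [h])]
    ring_nf
  have h2 : x ^ (a - 1) < (x + 1) ^ (a - 1) :=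
    Real.rpow_lt_rpow (le_of_lt hx0) (by linarith) (by linarith)
  have h3 : (1:ℝ) ≤ x ^ (a - 1) := Real.one_le_rpow hx (by linarith)
  have h4 : x * x ^ (a - 1) = x ^ a := by
    rw [← Real.rpow_one_add' (le_of_lt hx0) (by intro h; linarith)]
    ring_nf
  nlinarith [h2, h3, h4, hx0]

theorem stmt14 (m n : ℕ) (hn : 1 ≤ n) (hmn : n < m) (t : ℕ) (ω : ℕ → ℝ)
    (hω : Monotone ω) (hωpos : ∀ s, 0 < ω s) (hωtop : Tendsto ω atTop atTop)
    (X : Fin m → Fin n → ℝ)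
    (hXbd : ∀ i j, |X i j| ≤ 1 / 2 - (2 : ℝ) ^ (-(t : ℤ)))
    (hXlarge : ∀ q : Fin m → ℤ, q ≠ 0 →
      ‖(fun j => ∑ i, (q i : ℝ) * X i j : Fin n → ℝ)‖ <
          m * ((2 : ℝ) ^ t) ^ (-(m : ℝ) / n + 1) →
        2 ^ t / ω t ≤ qnorm q) :
    ∃ q : Fin m → ℤ, q ≠ 0 ∧ 2 ^ t / ω t ≤ qnorm q ∧ qnorm q ≤ 2 ^ t ∧
      ∃ U : Fin m → Fin n → ℝ, (∀ j, ∑ i, (q i : ℝ) * U i j = 0) ∧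
        ∀ i j, |X i j - U i j| ≤ m * ((2 : ℝ) ^ t) ^ (-(m : ℝ) / n) * ω t := by
  have hm1 : 1 ≤ m := hn.trans hmn.le
  have hmpos : (0:ℝ) < m := by exact_mod_cast lt_of_lt_of_le Nat.one_pos hm1
  have hnpos : (0:ℝ) < n := by exact_mod_cast hn
  set a : ℝ := (m:ℝ)/n with ha
  have ha1 : 1 < a := (one_lt_div hnpos).mpr (by exact_mod_cast hmn)
  set P : ℝ := (2:ℝ)^t with hP
  have hP1 : (1:ℝ) ≤ P := one_le_pow₀ (by norm_num)
  have hPpos : (0:ℝ) < P := lt_of_lt_of_le one_pos hP1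
  set ε : ℝ := m * P ^ (-(m : ℝ) / n + 1) with hε
  have hεeq : ε = m * P ^ (1 - a) := by rw [hε, ha]; ring_nf
  have hεpos : 0 < ε := by
    rw [hε]; exact mul_pos hmpos (Real.rpow_pos_of_pos hPpos _)
  set Q : ℕ := 2^t with hQ
  have hPQ : (Q:ℝ) = P := by rw [hQ, hP]; push_cast; ring
  set K : ℤ := ⌊P ^ a⌋ with hK
  have hPa1 : (1:ℝ) ≤ P ^ a := Real.one_le_rpow hP1 (by linarith)
  have hK0 : 0 ≤ K := Int.le_floor.mpr (by simpa using le_trans zero_le_one hPa1)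
  have hXhalf : ∀ i j, |X i j| ≤ 1/2 := fun i j =>
    (hXbd i j).trans (sub_le_self _ (by positivity))
  -- the linear forms
  set A : (Fin m → Fin (Q+1)) → Fin n → ℝ := fun q j => ∑ i, ((q i : ℕ) : ℝ) * X i j with hA
  have hAbd : ∀ q j, |A q j| ≤ m * Q / 2 := by
    intro q j
    calc |A q j| ≤ ∑ i, |((q i : ℕ) : ℝ) * X i j| := Finset.abs_sum_le_sum_abs _ _
      _ ≤ ∑ _i : Fin m, (Q:ℝ) * (1/2) := by
          refine Finset.sum_le_sum fun i _ => ?_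
          rw [abs_mul, abs_of_nonneg (by positivity)]
          have h1 : ((q i : ℕ) : ℝ) ≤ Q := by exact_mod_cast Fin.is_le (q i)
          exact mul_le_mul h1 (hXhalf i j) (abs_nonneg _) (by positivity)
      _ = m * Q / 2 := by rw [Finset.sum_const]; simp; ring
  -- key : m*Q/ε = P^a
  have hkey : (m:ℝ) * Q = ε * P ^ a := by
    rw [hεeq, hPQ, mul_assoc, ← Real.rpow_add hPpos]
    norm_num
  set F : (Fin m → Fin (Q+1)) → Fin n → ℤ := fun q j => ⌊(A q j + m*Q/2)/ε⌋ with hF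
  have hmapsto : ∀ q, F q ∈ Fintype.piFinset (fun _ : Fin n => Finset.Icc (0:ℤ) K) := by
    intro q
    rw [Fintype.mem_piFinset]
    intro j
    rw [Finset.mem_Icc]
    have hb := hAbd q j
    rw [abs_le] at hb
    constructor
    · apply Int.le_floor.mpr
      push_cast
      exact div_nonneg (by linarith) hεpos.le
    · apply Int.floor_le_floor
      rw [div_le_iff₀ hεpos]
      nlinarith [hkey, hb.2]
  -- pigeonhole
  have hcard : (Fintype.piFinset (fun _ : Fin n => Finset.Icc (0:ℤ) K)).card
      < (Finset.univ : Finset (Fin m → Fin (Q+1))).card := by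
    have h1 : (Fintype.piFinset (fun _ : Fin n => Finset.Icc (0:ℤ) K)).card
        = ((K+1).toNat)^n := by
      rw [Fintype.card_piFinset]
      simp [Int.card_Icc]
    have h2 : (Finset.univ : Finset (Fin m → Fin (Q+1))).card = (Q+1)^m := by
      simp [Fintype.card_fun]
    rw [h1, h2]
    have hreal : (((K+1).toNat : ℝ))^n < ((Q+1 : ℕ) : ℝ)^m := by
      have hKle : ((K+1).toNat : ℝ) ≤ P ^ a + 1 := by
        have h0 : ((K+1).toNat : ℤ) = K+1 := Int.toNat_of_nonneg (by linarith)
        have h0' : ((K+1).toNat : ℝ) = (K:ℝ)+1 := by exact_mod_cast h0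
        rw [h0']
        have h5 : ((⌊P ^ a⌋ : ℤ) : ℝ) ≤ P ^ a := Int.floor_le (P ^ a)
        rw [hK]
        linarith
      have hlt : P ^ a + 1 < (P + 1) ^ a := rpow_add_one_lt hP1 ha1
      have hQP : ((Q+1:ℕ):ℝ) = P + 1 := by push_cast [hPQ]; ring
      have hexp : ((P+1) ^ a) ^ (n:ℕ) = (P+1) ^ (m:ℕ) := by
        rw [← Real.rpow_natCast ((P+1)^a) n, ← Real.rpow_natCast (P+1) m,
          ← Real.rpow_mul (by positivity)]
        congr 1
        rw [ha]
        field_simp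
      calc (((K+1).toNat : ℝ))^n ≤ (P ^ a + 1)^n := by
            exact pow_le_pow_left₀ (by positivity) hKle n
        _ < ((P+1) ^ a) ^ n := by
            apply pow_lt_pow_left₀ hlt (by positivity)
            omega
        _ = (P+1) ^ (m:ℕ) := hexp
        _ = ((Q+1:ℕ):ℝ)^m := by rw [hQP]
    exact_mod_cast hreal
  obtain ⟨q1, -, q2, -, hq12, hFeq⟩ :=
    Finset.exists_ne_map_eq_of_card_lt_of_maps_to hcard (fun q _ => hmapsto q)
  -- the difference vector
  set q : Fin m → ℤ := fun i => ((q1 i : ℕ) : ℤ) - ((q2 i : ℕ) : ℤ) with hq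
  have hqne : q ≠ 0 := by
    intro h
    apply hq12
    funext i
    have := congrFun h i
    simp only [hq, Pi.zero_apply, sub_eq_zero] at this
    exact Fin.ext (by exact_mod_cast this)
  -- coordinates bounded by Q
  have hqbd : ∀ i, |(q i : ℝ)| ≤ P := by
    intro i
    rw [hq]
    push_cast
    rw [abs_sub_comm, ← hPQ]
    have h1 : ((q1 i : ℕ) : ℝ) ≤ Q := by exact_mod_cast Fin.is_le (q1 i)
    have h2 : ((q2 i : ℕ) : ℝ) ≤ Q := by exact_mod_cast Fin.is_le (q2 i)
    have h3 : (0:ℝ) ≤ ((q1 i : ℕ) : ℝ) := Nat.cast_nonneg _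
    have h4 : (0:ℝ) ≤ ((q2 i : ℕ) : ℝ) := Nat.cast_nonneg _
    rw [abs_le]
    constructor <;> linarith
  have hqnorm_le : qnorm q ≤ P := by
    rw [qnorm]
    apply pi_norm_le_iff_of_nonneg hPpos.le |>.mpr
    intro i
    simpa [Real.norm_eq_abs] using hqbd i
  -- the small linear forms
  have hsmall : ∀ j, |∑ i, (q i : ℝ) * X i j| < ε := by
    intro j
    have hdiff : ∑ i, (q i : ℝ) * X i j = A q1 j - A q2 j := by
      rw [hA, ← Finset.sum_sub_distrib]
      refine Finset.sum_congr rfl fun i _ => ?_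
      rw [hq]
      push_cast
      ring
    have hfl : ⌊(A q1 j + m*Q/2)/ε⌋ = ⌊(A q2 j + m*Q/2)/ε⌋ := congrFun hFeq j
    have h1 := Int.floor_le ((A q1 j + m*Q/2)/ε)
    have h2 := Int.lt_floor_add_one ((A q1 j + m*Q/2)/ε)
    have h3 := Int.floor_le ((A q2 j + m*Q/2)/ε)
    have h4 := Int.lt_floor_add_one ((A q2 j + m*Q/2)/ε)
    rw [hfl] at h1 h2
    have hd : |(A q1 j + m*Q/2)/ε - (A q2 j + m*Q/2)/ε| < 1 := by
      rw [abs_lt]; constructor <;> linarith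
    have hd2 : (A q1 j + m*Q/2)/ε - (A q2 j + m*Q/2)/ε
        = (∑ i, (q i : ℝ) * X i j) / ε := by
      rw [hdiff]; ring
    rw [hd2] at hd
    rw [abs_div, abs_of_pos hεpos, div_lt_one hεpos] at hd
    exact hd
  have hnormlt : ‖(fun j => ∑ i, (q i : ℝ) * X i j : Fin n → ℝ)‖ < ε := by
    apply pi_norm_lt_iff hεpos |>.mpr
    intro j
    simpa [Real.norm_eq_abs] using hsmall j
  have hlower : P / ω t ≤ qnorm q := hXlarge q hqne hnormlt
  have hωt : 0 < ω t := hωpos t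
  have hqnorm_pos : 0 < qnorm q := lt_of_lt_of_le (by positivity) hlower
  -- pick a maximal coordinate
  haveI : Nonempty (Fin m) := Fin.pos_iff_nonempty.mp (by omega)
  obtain ⟨i0, -, hi0⟩ := Finset.exists_mem_eq_sup (Finset.univ : Finset (Fin m))
    Finset.univ_nonempty (fun i => ‖(q i : ℝ)‖₊)
  have hqnorm_eq : qnorm q = |(q i0 : ℝ)| := by
    rw [qnorm, Pi.norm_def, hi0]
    simp [Real.norm_eq_abs]
  have hqi0 : (q i0 : ℝ) ≠ 0 := by
    intro h
    rw [hqnorm_eq, h, abs_zero] at hqnorm_pos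
    exact lt_irrefl _ hqnorm_pos
  -- construct U
  set v : Fin n → ℝ := fun j => ∑ i, (q i : ℝ) * X i j with hv
  set U : Fin m → Fin n → ℝ :=
    fun i' j => X i' j - (if i' = i0 then v j / (q i0 : ℝ) else 0) with hU
  refine ⟨q, hqne, hlower, hqnorm_le, U, ?_, ?_⟩
  · intro j
    rw [hU]
    simp only [mul_sub]
    rw [Finset.sum_sub_distrib]
    have : ∑ i, (q i : ℝ) * (if i = i0 then v j / (q i0 : ℝ) else 0)
        = (q i0 : ℝ) * (v j / (q i0 : ℝ)) := by
      rw [Finset.sum_eq_single i0]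
      · simp
      · intro b _ hb; simp [hb]
      · intro h; exact absurd (Finset.mem_univ i0) h
    rw [this, mul_div_cancel₀ _ hqi0]
    simp [hv]
  · intro i j
    simp only [hU]
    have hrhs : 0 ≤ (m:ℝ) * P ^ (-(m : ℝ) / n) * ω t := by positivity
    by_cases hi : i = i0
    · subst hi
      rw [if_pos rfl, sub_sub_cancel, abs_div]
      rw [div_le_iff₀ (by rw [← hqnorm_eq]; exact hqnorm_pos)]
      rw [← hqnorm_eq]
      have h1 : |v j| ≤ ε := (hsmall j).le
      have hωne : ω t ≠ 0 := (hωpos t).ne'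
      have h2 : (m:ℝ) * P ^ (-(m : ℝ) / n) * ω t * (P / ω t)
          ≤ (m:ℝ) * P ^ (-(m : ℝ) / n) * ω t * qnorm q := by
        apply mul_le_mul_of_nonneg_left hlower (by positivity)
      have hpa : P ^ (-(m : ℝ) / n) * P = P ^ (1 - a) := by
        nth_rewrite 2 [← Real.rpow_one P]
        rw [← Real.rpow_add hPpos]
        congr 1
        rw [ha]
        ring
      have h3 : (m:ℝ) * P ^ (-(m : ℝ) / n) * ω t * (P / ω t) = ε := by
        calc (m:ℝ) * P ^ (-(m:ℝ)/n) * ω t * (P / ω t)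
            = (m:ℝ) * (P ^ (-(m:ℝ)/n) * P) * (ω t / ω t) := by ring
          _ = (m:ℝ) * P ^ (1-a) := by rw [hpa, div_self hωne]; ring
          _ = ε := hεeq.symm
      calc |v j| ≤ ε := h1
        _ = (m:ℝ) * P ^ (-(m : ℝ) / n) * ω t * (P / ω t) := h3.symm
        _ ≤ (m:ℝ) * P ^ (-(m : ℝ) / n) * ω t * qnorm q := h2
    · simp only [if_neg hi, sub_zero, sub_self, abs_zero]
      exact hrhs
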